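/- The point P_{3,1} = (5041/48 + 71s/24 + s²/48, 2917/4 + 53s/2 + s²/4) on the elliptic curve D_s : y² = x³ + a(s)x + b(s) (with a(s) = −(1/768)(s+47)(s+71)(s²+70s+1657), b(s) = (1/55296)(s²+70s+793)(s⁴+212s³+17502s²+648644s+9038089)) has order exactly 3, provided s ∉ {−35, −53±6√−3} so that D_s is smooth. -/

import Mathlib

open WeierstrassCurve

/-- The family D_s : y² = x³ + a(s)x + b(s) of general type, over ℂ. -/
noncomputable def Dgen (s : ℂ) : Affine ℂ :=
  { a₁ := 0, a₂ := 0, a₃ := 0,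
    a₄ := -(1 / 768) * (s + 47) * (s + 71) * (s ^ 2 + 70 * s + 1657),
    a₆ := (1 / 55296) * (s ^ 2 + 70 * s + 793)
      * (s ^ 4 + 212 * s ^ 3 + 17502 * s ^ 2 + 648644 * s + 9038089) }

/-- P_{3,1} has order exactly 3 on D_s for s away from the singular fibers,
where r denotes a fixed square root of -3. -/
theorem stmt14 (r : ℂ) (hr : r ^ 2 = -3) (s : ℂ) (h1 : s ≠ -35)
    (h2 : s ≠ -53 + 6 * r) (h3 : s ≠ -53 - 6 * r) :
    ∃ h : (Dgen s).Nonsingular (5041 / 48 + 71 * s / 24 + s ^ 2 / 48)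
        (2917 / 4 + 53 * s / 2 + s ^ 2 / 4),
      addOrderOf (Affine.Point.some _ _ h) = 3 := by
  set X : ℂ := 5041 / 48 + 71 * s / 24 + s ^ 2 / 48 with hX
  set Y : ℂ := 2917 / 4 + 53 * s / 2 + s ^ 2 / 4 with hY
  have hy0 : Y ≠ 0 := by
    have hfac : Y = (s - (-53 + 6 * r)) * (s - (-53 - 6 * r)) / 4 := by
      rw [hY]; linear_combination (9 : ℂ) * hr
    rw [hfac]
    exact div_ne_zero (mul_ne_zero (sub_ne_zero.mpr h2) (sub_ne_zero.mpr h3)) (by norm_num)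
  have h2y : (2 : ℂ) * Y ≠ 0 := mul_ne_zero two_ne_zero hy0
  have heq : (Dgen s).Equation X Y := by
    rw [Affine.equation_iff]
    simp only [Dgen, hX, hY]
    ring
  have hns : (Dgen s).Nonsingular X Y := by
    rw [Affine.nonsingular_iff]
    refine ⟨heq, Or.inr ?_⟩
    simp only [Dgen]
    intro h
    exact h2y (by linear_combination h)
  have hnegY : (Dgen s).negY X Y = -Y := by simp [Affine.negY, Dgen]
  have hyne : Y ≠ (Dgen s).negY X Y := by
    rw [hnegY]
    intro h
    exact h2y (by linear_combination h)
  -- the slope of the tangent line at P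
  have hL : (Dgen s).slope X X Y Y = (3 * X ^ 2 + (Dgen s).a₄) / (2 * Y) := by
    rw [Affine.slope_of_Y_ne rfl hyne, hnegY]
    simp only [Dgen]
    ring_nf
  have hLsq : ((Dgen s).slope X X Y Y) ^ 2 = 3 * X := by
    rw [hL, div_pow, div_eq_iff (pow_ne_zero 2 h2y)]
    simp only [Dgen, hX, hY]
    ring
  have ha1 : (Dgen s).a₁ = 0 := rfl
  have ha2 : (Dgen s).a₂ = 0 := rfl
  have hxadd : (Dgen s).addX X X ((Dgen s).slope X X Y Y) = X := by
    rw [Affine.addX, hLsq, ha1, ha2]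
    ring
  have hyadd : (Dgen s).negAddY X X Y ((Dgen s).slope X X Y Y) = Y := by
    rw [Affine.negAddY, hxadd]
    ring
  -- P + P = -P
  have key : ∀ (x' y' : ℂ) (h' : (Dgen s).Nonsingular x' y'), x' = X → y' = Y →
      Affine.Point.some _ _ h' = Affine.Point.some _ _ hns := by
    rintro x' y' h' rfl rfl
    rfl
  have hdbl : Affine.Point.some _ _ hns + Affine.Point.some _ _ hns = -Affine.Point.some _ _ hns := by
    rw [Affine.Point.add_self_of_Y_ne' hyne]
    exact congrArg Neg.neg (key _ _ _ hxadd hyadd)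
  have h3P : (3 : ℕ) • Affine.Point.some _ _ hns = 0 := by
    rw [show (3 : ℕ) = 2 + 1 from rfl, add_nsmul, two_nsmul, one_nsmul, hdbl, neg_add_cancel]
  have hne0 : Affine.Point.some _ _ hns ≠ 0 := by
    rw [Affine.Point.zero_def]
    exact fun h => by cases h
  haveI : Fact (Nat.Prime 3) := ⟨by norm_num⟩
  exact ⟨hns, addOrderOf_eq_prime h3P hne0⟩
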